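/- Let λ > 0 and f(x,y) = 1 + λ(√(1+x²) + x + √(1+y²) + y). Then the graph of f has everywhere positive Gauss curvature and no umbilical points. Specifically, f₁₁ f₂₂ − f₁₂² > 0 everywhere, while (1+f₁²)f₁₂ − f₁f₂f₁₁ = −f₁f₂f₁₁ ≠ 0 everywhere. -/

import Mathlib

noncomputable def phiU (t : ℝ) : ℝ := Real.sqrt (1 + t ^ 2)

lemma phiU_pos (t : ℝ) : 0 < phiU t := Real.sqrt_pos.2 (by positivity)

lemma phiU_sq (t : ℝ) : phiU t ^ 2 = 1 + t ^ 2 := Real.sq_sqrt (by positivity)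

lemma hasDerivAt_phiU (t : ℝ) : HasDerivAt phiU (t / phiU t) t := by
  have h1 : HasDerivAt (fun s : ℝ => 1 + s ^ 2) (2 * t) t := by
    simpa using ((hasDerivAt_pow 2 t).const_add 1)
  have h2 := (Real.hasDerivAt_sqrt (by positivity : (1 + t ^ 2 : ℝ) ≠ 0)).comp t h1
  refine h2.congr_deriv ?_
  symm
  have := (phiU_pos t).ne'
  field_simp [phiU]
  simp [phiU]

noncomputable def g1U (l t : ℝ) : ℝ := l * (t / phiU t + 1)

lemma g1U_pos {l : ℝ} (hl : 0 < l) (t : ℝ) : 0 < g1U l t := by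
  have habs : |t| < phiU t := by
    rw [← Real.sqrt_sq_eq_abs]
    exact Real.sqrt_lt_sqrt (by positivity) (by nlinarith)
  have h : -1 < t / phiU t := by
    rw [lt_div_iff₀ (phiU_pos t)]
    nlinarith [neg_abs_le t]
  exact mul_pos hl (by linarith)

noncomputable def dU (l t : ℝ) : ℝ := l * (1 / phiU t ^ 3)

lemma dU_pos {l : ℝ} (hl : 0 < l) (t : ℝ) : 0 < dU l t := by
  have := phiU_pos t; unfold dU; positivity

lemma hasDerivAt_g1U (l t : ℝ) : HasDerivAt (g1U l) (dU l t) t := by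
  have h := (((hasDerivAt_id t).div (hasDerivAt_phiU t) (phiU_pos t).ne').add_const 1).const_mul l
  refine h.congr_deriv ?_
  symm
  have hp := (phiU_pos t).ne'
  have hsq := phiU_sq t
  unfold dU
  have h1 : phiU t * phiU t - t * t = 1 := by nlinarith [phiU_sq t]
  field_simp
  simp only [id]; rw [hsq]; ring

noncomputable def FmapU (l : ℝ) (q : ℝ × ℝ) : ℝ × ℝ →L[ℝ] ℝ :=
  g1U l q.1 • ContinuousLinearMap.fst ℝ ℝ ℝ + g1U l q.2 • ContinuousLinearMap.snd ℝ ℝ ℝ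

lemma hasFDerivAt_FU (l : ℝ) (q : ℝ × ℝ) :
    HasFDerivAt (fun w : ℝ × ℝ =>
      1 + l * (Real.sqrt (1 + w.1 ^ 2) + w.1 + Real.sqrt (1 + w.2 ^ 2) + w.2))
      (FmapU l q) q := by
  have h1 : HasFDerivAt (fun w : ℝ × ℝ => phiU w.1)
      ((q.1 / phiU q.1) • ContinuousLinearMap.fst ℝ ℝ ℝ) q :=
    (hasDerivAt_phiU q.1).comp_hasFDerivAt q hasFDerivAt_fst
  have h2 : HasFDerivAt (fun w : ℝ × ℝ => phiU w.2)
      ((q.2 / phiU q.2) • ContinuousLinearMap.snd ℝ ℝ ℝ) q :=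
    (hasDerivAt_phiU q.2).comp_hasFDerivAt q hasFDerivAt_snd
  have h := ((((h1.add hasFDerivAt_fst).add h2).add hasFDerivAt_snd).const_mul l).const_add 1
  have hmap : FmapU l q = l • ((q.1 / phiU q.1) • ContinuousLinearMap.fst ℝ ℝ ℝ +
      ContinuousLinearMap.fst ℝ ℝ ℝ + (q.2 / phiU q.2) • ContinuousLinearMap.snd ℝ ℝ ℝ +
      ContinuousLinearMap.snd ℝ ℝ ℝ) := by
    refine ContinuousLinearMap.ext fun v => ?_
    simp [FmapU, g1U]
    ring
  rw [hmap]
  exact h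

lemma hasFDerivAt_g1U_fst (l : ℝ) (p : ℝ × ℝ) :
    HasFDerivAt (fun q : ℝ × ℝ => g1U l q.1)
      (dU l p.1 • ContinuousLinearMap.fst ℝ ℝ ℝ) p :=
  (hasDerivAt_g1U l p.1).comp_hasFDerivAt p hasFDerivAt_fst

lemma hasFDerivAt_g1U_snd (l : ℝ) (p : ℝ × ℝ) :
    HasFDerivAt (fun q : ℝ × ℝ => g1U l q.2)
      (dU l p.2 • ContinuousLinearMap.snd ℝ ℝ ℝ) p :=
  (hasDerivAt_g1U l p.2).comp_hasFDerivAt p hasFDerivAt_snd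

/-- For `λ > 0` and `f(x,y) = 1 + λ(√(1+x²) + x + √(1+y²) + y)`,
the graph of `f` has everywhere positive Gauss curvature (`f₁₁f₂₂ − f₁₂² > 0`) and no
umbilical points: `(1+f₁²)f₁₂ − f₁f₂f₁₁ = −f₁f₂f₁₁ ≠ 0` everywhere. -/
theorem positively_curved_graph_umbilic_free (l : ℝ) (hl : 0 < l) :
    ∀ p : ℝ × ℝ,
      (fun f : ℝ × ℝ → ℝ =>
        0 < fderiv ℝ (fun q => fderiv ℝ f q (1, 0)) p (1, 0) *
              fderiv ℝ (fun q => fderiv ℝ f q (0, 1)) p (0, 1)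
            - (fderiv ℝ (fun q => fderiv ℝ f q (0, 1)) p (1, 0)) ^ 2 ∧
        (1 + (fderiv ℝ f p (1, 0)) ^ 2) * fderiv ℝ (fun q => fderiv ℝ f q (0, 1)) p (1, 0)
            - fderiv ℝ f p (1, 0) * fderiv ℝ f p (0, 1) *
                fderiv ℝ (fun q => fderiv ℝ f q (1, 0)) p (1, 0)
          = -(fderiv ℝ f p (1, 0) * fderiv ℝ f p (0, 1) *
                fderiv ℝ (fun q => fderiv ℝ f q (1, 0)) p (1, 0)) ∧
        fderiv ℝ f p (1, 0) * fderiv ℝ f p (0, 1) *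
            fderiv ℝ (fun q => fderiv ℝ f q (1, 0)) p (1, 0) ≠ 0)
        (fun w : ℝ × ℝ =>
          1 + l * (Real.sqrt (1 + w.1 ^ 2) + w.1 + Real.sqrt (1 + w.2 ^ 2) + w.2)) := by
  intro p
  set F : ℝ × ℝ → ℝ := fun w =>
    1 + l * (Real.sqrt (1 + w.1 ^ 2) + w.1 + Real.sqrt (1 + w.2 ^ 2) + w.2) with hF
  have e1 : ∀ q : ℝ × ℝ, fderiv ℝ F q (1, 0) = g1U l q.1 := by
    intro q
    rw [(hasFDerivAt_FU l q).fderiv]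
    simp [FmapU]
  have e2 : ∀ q : ℝ × ℝ, fderiv ℝ F q (0, 1) = g1U l q.2 := by
    intro q
    rw [(hasFDerivAt_FU l q).fderiv]
    simp [FmapU]
  have hfun1 : (fun q => fderiv ℝ F q (1, 0)) = fun q : ℝ × ℝ => g1U l q.1 := funext e1
  have hfun2 : (fun q => fderiv ℝ F q (0, 1)) = fun q : ℝ × ℝ => g1U l q.2 := funext e2
  rw [hfun1, hfun2, e1 p, e2 p, (hasFDerivAt_g1U_fst l p).fderiv,
    (hasFDerivAt_g1U_snd l p).fderiv]
  simp only [ContinuousLinearMap.coe_smul', Pi.smul_apply, ContinuousLinearMap.coe_fst',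
    ContinuousLinearMap.coe_snd', smul_eq_mul, mul_one, mul_zero]
  refine ⟨by nlinarith [dU_pos hl p.1, dU_pos hl p.2], by ring, ?_⟩
  exact ne_of_gt (mul_pos (mul_pos (g1U_pos hl p.1) (g1U_pos hl p.2)) (dU_pos hl p.1))
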